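/- Let d be a natural number, let Ω and H be real d×d matrices with Ω antisymmetric and H symmetric positive semidefinite, and let y : ℝ → ℝ^d be twice differentiable with y″(t) + 2Ω·y′(t) + H·y(t) = 0 for all t ∈ ℝ. Then for every t ∈ ℝ: ⟨y(t), H·y(t)⟩ ≤ ‖y′(0)‖² + ⟨y(0), H·y(0)⟩ and ‖y′(t)‖² ≤ ‖y′(0)‖² + ⟨y(0), H·y(0)⟩. -/

import Mathlib

open Matrix

lemma dotDeriv {d : ℕ} {u v : ℝ → Fin d → ℝ} {u' v' : Fin d → ℝ} {t : ℝ}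
    (hu : HasDerivAt u u' t) (hv : HasDerivAt v v' t) :
    HasDerivAt (fun s => u s ⬝ᵥ v s) (u' ⬝ᵥ v t + u t ⬝ᵥ v') t := by
  have : HasDerivAt (fun s => ∑ i, u s i * v s i)
      (∑ i, (u' i * v t i + u t i * v' i)) t := by
    apply HasDerivAt.fun_sum
    intro i _
    exact ((hasDerivAt_pi.mp hu i).mul (hasDerivAt_pi.mp hv i))
  simpa [dotProduct, Finset.sum_add_distrib] using this

lemma mulVecDeriv {d : ℕ} (A : Matrix (Fin d) (Fin d) ℝ) {u : ℝ → Fin d → ℝ} {u' : Fin d → ℝ} {t : ℝ}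
    (hu : HasDerivAt u u' t) :
    HasDerivAt (fun s => A.mulVec (u s)) (A.mulVec u') t := by
  rw [hasDerivAt_pi]
  intro i
  have : HasDerivAt (fun s => ∑ j, A i j * u s j) (∑ j, A i j * u' j) t :=
    HasDerivAt.fun_sum fun j _ => (hasDerivAt_pi.mp hu j).const_mul (A i j)
  simpa [Matrix.mulVec, dotProduct] using this

lemma dot_self_nonneg {d : ℕ} (u : Fin d → ℝ) : 0 ≤ u ⬝ᵥ u :=
  Finset.sum_nonneg fun i _ => mul_self_nonneg (u i)

lemma skew_dot {d : ℕ} {Ω : Matrix (Fin d) (Fin d) ℝ} (hΩ : Ωᵀ = -Ω) (v : Fin d → ℝ) :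
    v ⬝ᵥ Ω.mulVec v = 0 := by
  have h1 : v ⬝ᵥ Ω.mulVec v = Ωᵀ.mulVec v ⬝ᵥ v := by
    rw [Matrix.dotProduct_mulVec, Matrix.mulVec_transpose]
  have h2 : Ωᵀ.mulVec v ⬝ᵥ v = -(Ω.mulVec v ⬝ᵥ v) := by
    rw [hΩ]; simp [Matrix.neg_mulVec]
  have h3 : Ω.mulVec v ⬝ᵥ v = v ⬝ᵥ Ω.mulVec v := dotProduct_comm _ _
  linarith [h1, h2, h3]

theorem stmt14 (d : ℕ) (Ω H : Matrix (Fin d) (Fin d) ℝ)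
    (hΩ : Ωᵀ = -Ω) (hH : H.PosSemidef)
    (y : ℝ → (Fin d → ℝ))
    (hy1 : Differentiable ℝ y) (hy2 : Differentiable ℝ (deriv y))
    (hode : ∀ t : ℝ,
      deriv (deriv y) t + (2 : ℝ) • Ω.mulVec (deriv y t) + H.mulVec (y t) = 0) :
    ∀ t : ℝ,
      y t ⬝ᵥ H.mulVec (y t) ≤ deriv y 0 ⬝ᵥ deriv y 0 + y 0 ⬝ᵥ H.mulVec (y 0) ∧
      deriv y t ⬝ᵥ deriv y t ≤ deriv y 0 ⬝ᵥ deriv y 0 + y 0 ⬝ᵥ H.mulVec (y 0) := by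
  have hHsymm : Hᵀ = H := by
    have := hH.1
    simpa [Matrix.IsHermitian, Matrix.conjTranspose_eq_transpose_of_trivial] using this
  have hsymm : ∀ a b : Fin d → ℝ, a ⬝ᵥ H.mulVec b = b ⬝ᵥ H.mulVec a := by
    intro a b
    rw [Matrix.dotProduct_mulVec, ← Matrix.mulVec_transpose, hHsymm,
      dotProduct_comm]
  set E : ℝ → ℝ := fun t => deriv y t ⬝ᵥ deriv y t + y t ⬝ᵥ H.mulVec (y t) with hE
  have hEderiv : ∀ t, HasDerivAt E 0 t := by
    intro t
    have hy1t : HasDerivAt y (deriv y t) t := (hy1 t).hasDerivAt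
    have hy2t : HasDerivAt (deriv y) (deriv (deriv y) t) t := (hy2 t).hasDerivAt
    have h1 : HasDerivAt (fun s => deriv y s ⬝ᵥ deriv y s)
        (deriv (deriv y) t ⬝ᵥ deriv y t + deriv y t ⬝ᵥ deriv (deriv y) t) t :=
      dotDeriv hy2t hy2t
    have h2 : HasDerivAt (fun s => y s ⬝ᵥ H.mulVec (y s))
        (deriv y t ⬝ᵥ H.mulVec (y t) + y t ⬝ᵥ H.mulVec (deriv y t)) t :=
      dotDeriv hy1t (mulVecDeriv H hy1t)
    have hsum := h1.add h2
    convert hsum using 1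
    any_goals rfl
    have h := hode t
    rw [add_assoc] at h
    have hyy : deriv (deriv y) t
        = -((2 : ℝ) • Ω.mulVec (deriv y t) + H.mulVec (y t)) :=
      eq_neg_of_add_eq_zero_left h
    have s1 := skew_dot hΩ (deriv y t)
    have s2 := hsymm (y t) (deriv y t)
    rw [hyy, dotProduct_comm]
    simp only [dotProduct_neg, dotProduct_add, dotProduct_smul,
      smul_eq_mul, s1, s2]
    ring
  have hEconst : ∀ t, E t = E 0 :=
    fun t => is_const_of_deriv_eq_zero (fun s => (hEderiv s).differentiableAt)
      (fun s => (hEderiv s).deriv) t 0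
  intro t
  have h := hEconst t
  simp only [hE] at h
  have hp1 := dot_self_nonneg (deriv y t)
  have hp2 : (0:ℝ) ≤ y t ⬝ᵥ H.mulVec (y t) := by simpa using hH.dotProduct_mulVec_nonneg (y t)
  constructor <;> linarith
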